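/- Let N ≥ 1 and let f_1,…,f_N : ℝ → ℝ be measurable functions such that ∫ |μ|^{i−1} |f_j(μ)| dμ < ∞ for all 1 ≤ i, j ≤ N. Then ∫_{ℝ^N} Δ(μ_1,…,μ_N) ∏_{k=1}^N f_k(μ_k) dμ = det( ∫_ℝ μ^{i−1} f_j(μ) dμ )_{i,j=1,…,N}. -/

import Mathlib

open MeasureTheory

/-- The Vandermonde product `Δ(l₁,…,l_N) = ∏_{j<i} (l_i − l_j)`. -/
noncomputable def vdm {N : ℕ} (l : Fin N → ℝ) : ℝ :=
  ∏ i : Fin N, ∏ j ∈ Finset.Ioi i, (l j - l i)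

theorem stmt1 (N : ℕ) (hN : 1 ≤ N) (f : Fin N → ℝ → ℝ)
    (hf : ∀ j, Measurable (f j))
    (hint : ∀ i : ℕ, i ≤ N - 1 → ∀ j : Fin N,
      Integrable (fun mu : ℝ => |mu| ^ i * |f j mu|)) :
    ∫ mu : Fin N → ℝ, vdm mu * ∏ k : Fin N, f k (mu k) =
      Matrix.det (Matrix.of fun i j : Fin N =>
        ∫ mu : ℝ, mu ^ (i : ℕ) * f j mu) := by
  -- single-variable integrands
  set g : Equiv.Perm (Fin N) → Fin N → ℝ → ℝ :=
    fun σ k x => x ^ ((σ⁻¹ k : Fin N) : ℕ) * f k x with hg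
  have hgint : ∀ σ k, Integrable (g σ k) := by
    intro σ k
    have hmeas : Measurable (g σ k) := (measurable_id.pow_const _).mul (hf k)
    have h1 : Integrable (fun x : ℝ => |x| ^ ((σ⁻¹ k : Fin N) : ℕ) * |f k x|) :=
      hint _ (Nat.le_pred_of_lt (σ⁻¹ k).isLt) k
    have : Integrable (fun x : ℝ => ‖g σ k x‖) := by
      simpa [hg, abs_mul, abs_pow] using h1
    exact (integrable_norm_iff hmeas.aestronglyMeasurable).mp this
  have key : ∀ (σ : Equiv.Perm (Fin N)) (mu : Fin N → ℝ),
      (∏ i : Fin N, mu (σ i) ^ (i : ℕ)) * ∏ k : Fin N, f k (mu k)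
        = ∏ k : Fin N, g σ k (mu k) := by
    intro σ mu
    have h1 : ∏ i : Fin N, mu (σ i) ^ (i : ℕ)
        = ∏ k : Fin N, mu k ^ ((σ⁻¹ k : Fin N) : ℕ) := by
      rw [← Equiv.prod_comp σ (fun k => mu k ^ ((σ⁻¹ k : Fin N) : ℕ))]
      simp
    rw [h1, ← Finset.prod_mul_distrib]
  calc ∫ mu : Fin N → ℝ, vdm mu * ∏ k : Fin N, f k (mu k)
      = ∫ mu : Fin N → ℝ, ∑ σ : Equiv.Perm (Fin N),
          (Equiv.Perm.sign σ : ℝ) * ∏ k : Fin N, g σ k (mu k) := by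
        congr 1; ext mu
        have hv : vdm mu = (Matrix.vandermonde mu).det :=
          (Matrix.det_vandermonde mu).symm
        rw [hv, Matrix.det_apply', Finset.sum_mul]
        refine Finset.sum_congr rfl fun σ _ => ?_
        rw [mul_assoc]
        congr 1
        simpa [Matrix.vandermonde] using key σ mu
    _ = ∑ σ : Equiv.Perm (Fin N),
          ∫ mu : Fin N → ℝ, (Equiv.Perm.sign σ : ℝ) * ∏ k : Fin N, g σ k (mu k) := by
        refine integral_finset_sum _ fun σ _ => ?_
        exact (Integrable.fintype_prod (fun k => hgint σ k)).const_mul _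
    _ = ∑ σ : Equiv.Perm (Fin N),
          (Equiv.Perm.sign σ : ℝ) * ∏ k : Fin N, ∫ x : ℝ, g σ k x := by
        refine Finset.sum_congr rfl fun σ _ => ?_
        rw [integral_const_mul, integral_fintype_prod_volume_eq_prod]
    _ = Matrix.det (Matrix.of fun i j : Fin N => ∫ mu : ℝ, mu ^ (i : ℕ) * f j mu) := by
        rw [← Matrix.det_transpose, Matrix.det_apply']
        refine Finset.sum_congr rfl fun σ _ => ?_
        congr 1
        have := Equiv.prod_comp σ (fun k => ∫ x : ℝ, g σ k x)
        rw [← this]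
        refine Finset.prod_congr rfl fun i _ => ?_
        simp only [hg, Matrix.transpose_apply, Matrix.of_apply, Equiv.Perm.inv_def, Equiv.symm_apply_apply]
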